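/- Let M be a unital *-algebra over ℂ, let A and B be unital subalgebras of M, let D be a unital *-subalgebra of A ∩ B, and let E_A : A → D and E_B : B → D be conditional expectations. Let q ∈ D satisfy q = q* = q², and let v₀, v₁, …, v_ℓ ∈ D satisfy vⱼvⱼ*vⱼ = vⱼ, vⱼ*vⱼ = q(vⱼ*vⱼ) = (vⱼ*vⱼ)q for each j, and Σ_{j=0}^{ℓ} vⱼvⱼ* = 1. Then every element of D ∪ Λ°(A ∩ ker E_A, B ∩ ker E_B) is a finite linear combination of elements of the form vᵢ z vⱼ* with 0 ≤ i, j ≤ ℓ and z ∈ qDq ∪ Λ°(qAq ∩ ker E_A, qBq ∩ ker E_B). -/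

import Mathlib

/-- `altSet X Y` is Λ°(X, Y): the set of all products `c₁c₂⋯cₙ`, `n ≥ 1`, where each
factor lies in `X` or in `Y` and consecutive factors come from different sets. -/
def altSet {M : Type*} [Monoid M] (X Y : Set M) : Set M :=
  { m | ∃ (n : ℕ) (_hn : 0 < n) (c : Fin n → M) (lab : Fin n → Bool),
      (∀ j, if lab j then c j ∈ X else c j ∈ Y) ∧
      (∀ (j : ℕ) (h : j + 1 < n),
        lab ⟨j, Nat.lt_of_succ_lt h⟩ ≠ lab ⟨j + 1, h⟩) ∧
      m = (List.ofFn c).prod }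

/-- Inductive characterization of alternating products, recording the first label. -/
inductive AltFrom {M : Type*} [Monoid M] (X Y : Set M) : Bool → M → Prop
  | base_t (x : M) (hx : x ∈ X) : AltFrom X Y true x
  | base_f (x : M) (hx : x ∈ Y) : AltFrom X Y false x
  | cons_t (x m : M) (hx : x ∈ X) (hm : AltFrom X Y false m) : AltFrom X Y true (x * m)
  | cons_f (x m : M) (hx : x ∈ Y) (hm : AltFrom X Y true m) : AltFrom X Y false (x * m)

lemma AltFrom.rep {M : Type*} [Monoid M] {X Y : Set M} {b : Bool} {m : M}
    (h : AltFrom X Y b m) :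
    ∃ (n : ℕ) (c : Fin (n+1) → M) (lab : Fin (n+1) → Bool),
      (∀ j, if lab j then c j ∈ X else c j ∈ Y) ∧
      (∀ (j : ℕ) (hj : j + 1 < n+1), lab ⟨j, Nat.lt_of_succ_lt hj⟩ ≠ lab ⟨j+1, hj⟩) ∧
      m = (List.ofFn c).prod ∧ lab 0 = b := by
  induction h with
  | base_t x hx =>
    exact ⟨0, fun _ => x, fun _ => true, fun j => by simpa using hx,
      fun j hj => absurd hj (by omega), by simp, rfl⟩
  | base_f x hx =>
    exact ⟨0, fun _ => x, fun _ => false, fun j => by simpa using hx,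
      fun j hj => absurd hj (by omega), by simp, rfl⟩
  | cons_t x m hx hm ih =>
    obtain ⟨n, c, lab, h1, h2, h3, h4⟩ := ih
    refine ⟨n+1, Fin.cons x c, Fin.cons true lab, ?_, ?_, ?_, ?_⟩
    · intro j
      refine Fin.cases ?_ ?_ j
      · simpa using hx
      · intro i; simpa using h1 i
    · intro j hj
      cases j with
      | zero =>
        have e0 : (⟨0, Nat.lt_of_succ_lt hj⟩ : Fin (n+2)) = 0 := rfl
        have e1 : (⟨1, hj⟩ : Fin (n+2)) = Fin.succ 0 := rfl
        rw [e0, e1, Fin.cons_zero, Fin.cons_succ, h4]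
        simp
      | succ i =>
        have e0 : (⟨i+1, Nat.lt_of_succ_lt hj⟩ : Fin (n+2))
            = Fin.succ ⟨i, by omega⟩ := rfl
        have e1 : (⟨i+2, hj⟩ : Fin (n+2)) = Fin.succ ⟨i+1, by omega⟩ := rfl
        rw [e0, e1, Fin.cons_succ, Fin.cons_succ]
        exact h2 i (by omega)
    · rw [h3, List.ofFn_succ]
      simp
    · rfl
  | cons_f x m hx hm ih =>
    obtain ⟨n, c, lab, h1, h2, h3, h4⟩ := ih
    refine ⟨n+1, Fin.cons x c, Fin.cons false lab, ?_, ?_, ?_, ?_⟩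
    · intro j
      refine Fin.cases ?_ ?_ j
      · simpa using hx
      · intro i; simpa using h1 i
    · intro j hj
      cases j with
      | zero =>
        have e0 : (⟨0, Nat.lt_of_succ_lt hj⟩ : Fin (n+2)) = 0 := rfl
        have e1 : (⟨1, hj⟩ : Fin (n+2)) = Fin.succ 0 := rfl
        rw [e0, e1, Fin.cons_zero, Fin.cons_succ, h4]
        simp
      | succ i =>
        have e0 : (⟨i+1, Nat.lt_of_succ_lt hj⟩ : Fin (n+2))
            = Fin.succ ⟨i, by omega⟩ := rfl
        have e1 : (⟨i+2, hj⟩ : Fin (n+2)) = Fin.succ ⟨i+1, by omega⟩ := rfl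
        rw [e0, e1, Fin.cons_succ, Fin.cons_succ]
        exact h2 i (by omega)
    · rw [h3, List.ofFn_succ]
      simp
    · rfl

lemma AltFrom.mem_altSet {M : Type*} [Monoid M] {X Y : Set M} {b : Bool} {m : M}
    (h : AltFrom X Y b m) : m ∈ altSet X Y := by
  obtain ⟨n, c, lab, h1, h2, h3, _⟩ := h.rep
  exact ⟨n+1, Nat.succ_pos n, c, lab, h1, h2, h3⟩

private lemma altFrom_aux {M : Type*} [Monoid M] {X Y : Set M} :
    ∀ (k : ℕ) (c : Fin (k+1) → M) (lab : Fin (k+1) → Bool),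
      (∀ j, if lab j then c j ∈ X else c j ∈ Y) →
      (∀ (j : ℕ) (h : j + 1 < k + 1), lab ⟨j, Nat.lt_of_succ_lt h⟩ ≠ lab ⟨j+1, h⟩) →
      AltFrom X Y (lab 0) (List.ofFn c).prod := by
  intro k
  induction k with
  | zero =>
    intro c lab hc _
    have h0 := hc 0
    simp only [List.ofFn_succ, List.ofFn_zero, List.prod_cons, List.prod_nil, mul_one]
    cases hb : lab 0 with
    | false => rw [hb] at h0; simp at h0; exact AltFrom.base_f _ h0
    | true => rw [hb] at h0; simp at h0; exact AltFrom.base_t _ h0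
  | succ k ih =>
    intro c lab hc hadj
    have hprod : (List.ofFn c).prod
        = c 0 * (List.ofFn (fun i : Fin (k+1) => c i.succ)).prod := by
      rw [List.ofFn_succ]; simp
    rw [hprod]
    have htail := ih (fun i => c i.succ) (fun i => lab i.succ) (fun j => hc j.succ)
      (fun j hj => by
        have e0 : Fin.succ (⟨j, Nat.lt_of_succ_lt hj⟩ : Fin (k+1))
            = (⟨j+1, by omega⟩ : Fin (k+2)) := rfl
        have e1 : Fin.succ (⟨j+1, hj⟩ : Fin (k+1)) = (⟨j+2, by omega⟩ : Fin (k+2)) := rfl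
        simp only [e0, e1]
        exact hadj (j+1) (by omega))
    have hne := hadj 0 (by omega)
    have e0 : (⟨0, by omega⟩ : Fin (k+2)) = 0 := rfl
    have e1 : (⟨1, by omega⟩ : Fin (k+2)) = Fin.succ 0 := rfl
    rw [e0, e1] at hne
    have h0 := hc 0
    cases hb : lab 0 with
    | false =>
      rw [hb] at h0 hne; simp at h0
      have ht : lab (Fin.succ 0) = true := by
        cases hE : lab (Fin.succ 0) with
        | true => rfl
        | false => rw [hE] at hne; exact absurd rfl hne
      have : (fun i : Fin (k+1) => lab i.succ) 0 = lab (Fin.succ 0) := rfl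
      rw [ht] at htail
      exact AltFrom.cons_f _ _ h0 htail
    | true =>
      rw [hb] at h0 hne; simp at h0
      have ht : lab (Fin.succ 0) = false := by
        cases hE : lab (Fin.succ 0) with
        | false => rfl
        | true => rw [hE] at hne; exact absurd rfl hne
      have : (fun i : Fin (k+1) => lab i.succ) 0 = lab (Fin.succ 0) := rfl
      rw [ht] at htail
      exact AltFrom.cons_t _ _ h0 htail

lemma altSet_exists_altFrom {M : Type*} [Monoid M] {X Y : Set M} {m : M}
    (hm : m ∈ altSet X Y) : ∃ b, AltFrom X Y b m := by
  obtain ⟨n, hn, c, lab, hc, hadj, rfl⟩ := hm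
  obtain ⟨k, rfl⟩ : ∃ k, n = k + 1 := ⟨n - 1, by omega⟩
  exact ⟨lab 0, altFrom_aux k c lab hc hadj⟩

private lemma span_map_mem {M : Type*} [Ring M] [Algebra ℂ M] (f : M →ₗ[ℂ] M)
    (s t : Set M) (h : ∀ w ∈ s, f w ∈ t) {m : M} (hm : m ∈ Submodule.span ℂ s) :
    f m ∈ Submodule.span ℂ t := by
  have h2 : Submodule.map f (Submodule.span ℂ s) ≤ Submodule.span ℂ t := by
    rw [Submodule.map_span]
    exact Submodule.span_le.2 (by rintro y ⟨w, hw, rfl⟩; exact Submodule.subset_span (h w hw))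
  exact h2 ⟨m, hm, rfl⟩

private lemma mul_mem_span {M : Type*} [Ring M] [Algebra ℂ M] (u : M)
    (s t : Set M) (h : ∀ w ∈ s, u * w ∈ t) {m : M} (hm : m ∈ Submodule.span ℂ s) :
    u * m ∈ Submodule.span ℂ t :=
  span_map_mem (LinearMap.mulLeft ℂ u) s t h hm

/-- Reduction to the corner of an abelian projection (Theorem 2.1(a)): if
`q ∈ D` is a projection and `v₀, …, v_ℓ ∈ D` are partial isometries with
`vⱼ*vⱼ ≤ q` and `Σⱼ vⱼvⱼ* = 1`, then every element of
`D ∪ Λ°(A ⊖ D, B ⊖ D)` is a linear combination of elements `vᵢ z vⱼ*` with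
`z ∈ qDq ∪ Λ°(qAq ⊖ D, qBq ⊖ D)`. -/
theorem corner_reduction {M : Type*} [Ring M] [Algebra ℂ M] [StarRing M]
    [StarModule ℂ M]
    (A B D : Subalgebra ℂ M) (hDA : D ≤ A) (hDB : D ≤ B)
    (hDstar : ∀ x ∈ D, star x ∈ D)
    (EA : ↥A →ₗ[ℂ] ↥D) (EB : ↥B →ₗ[ℂ] ↥D)
    (hEA1 : ∀ d : ↥D, EA ⟨(d : M), hDA d.2⟩ = d)
    (hEA2 : ∀ (d₁ d₂ : ↥D) (a : ↥A),
      ((EA (⟨(d₁ : M), hDA d₁.2⟩ * a * ⟨(d₂ : M), hDA d₂.2⟩) : ↥D) : M)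
        = (d₁ : M) * ((EA a : ↥D) : M) * (d₂ : M))
    (hEB1 : ∀ d : ↥D, EB ⟨(d : M), hDB d.2⟩ = d)
    (hEB2 : ∀ (d₁ d₂ : ↥D) (b : ↥B),
      ((EB (⟨(d₁ : M), hDB d₁.2⟩ * b * ⟨(d₂ : M), hDB d₂.2⟩) : ↥D) : M)
        = (d₁ : M) * ((EB b : ↥D) : M) * (d₂ : M))
    (q : M) (hqD : q ∈ D) (hqstar : star q = q) (hqidem : q * q = q)
    (ℓ : ℕ) (v : Fin (ℓ + 1) → M) (hvD : ∀ j, v j ∈ D)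
    (hvpi : ∀ j, v j * star (v j) * v j = v j)
    (hvq : ∀ j, star (v j) * v j = q * (star (v j) * v j) ∧
                star (v j) * v j = (star (v j) * v j) * q)
    (hvsum : ∑ j, v j * star (v j) = 1) :
    (D : Set M) ∪ altSet { x : M | ∃ hx : x ∈ A, EA ⟨x, hx⟩ = 0 }
                         { x : M | ∃ hx : x ∈ B, EB ⟨x, hx⟩ = 0 }
      ⊆ (Submodule.span ℂ { x : M | ∃ (i j : Fin (ℓ + 1)) (z : M),
          z ∈ ((fun d => q * d * q) '' (D : Set M)) ∪
              altSet (((fun a => q * a * q) '' (A : Set M)) ∩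
                        { x : M | ∃ hx : x ∈ A, EA ⟨x, hx⟩ = 0 })
                     (((fun b => q * b * q) '' (B : Set M)) ∩
                        { x : M | ∃ hx : x ∈ B, EB ⟨x, hx⟩ = 0 }) ∧
          x = v i * z * star (v j) } : Set M) := by
  -- basic projection facts
  have qv : ∀ j, v j * q = v j := by
    intro j
    calc v j * q = v j * star (v j) * v j * q := by rw [hvpi]
      _ = v j * (star (v j) * v j * q) := by noncomm_ring
      _ = v j * (star (v j) * v j) := by rw [← (hvq j).2]
      _ = v j := by rw [← mul_assoc, hvpi]
  have qvs : ∀ j, q * star (v j) = star (v j) := by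
    intro j
    have h := congrArg star (qv j)
    rwa [star_mul, hqstar] at h
  have corner : ∀ (i k : Fin (ℓ+1)) (y : M),
      q * (star (v i) * y * v k) * q = star (v i) * y * v k := by
    intro i k y
    rw [show q * (star (v i) * y * v k) * q = (q * star (v i)) * y * (v k * q) from by
      noncomm_ring, qvs, qv]
  -- the fundamental decomposition of the identity
  have key : ∀ x : M,
      x = ∑ i : Fin (ℓ+1), ∑ j : Fin (ℓ+1),
        v i * (star (v i) * x * v j) * star (v j) := by
    intro x
    calc x = (∑ i, v i * star (v i)) * x * (∑ j, v j * star (v j)) := by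
          rw [hvsum, one_mul, mul_one]
      _ = ∑ i : Fin (ℓ+1), ∑ j : Fin (ℓ+1),
            v i * (star (v i) * x * v j) * star (v j) := by
          rw [Finset.sum_mul, Finset.sum_mul]
          refine Finset.sum_congr rfl fun i _ => ?_
          rw [Finset.mul_sum]
          refine Finset.sum_congr rfl fun j _ => ?_
          simp only [mul_assoc]
  have split : ∀ (i j : Fin (ℓ+1)) (x m : M),
      star (v i) * (x * m) * v j
        = ∑ k, (star (v i) * x * v k) * (star (v k) * m * v j) := by
    intro i j x m
    have h1 : (∑ k, (star (v i) * x * v k) * (star (v k) * m * v j))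
        = star (v i) * x * (∑ k, v k * star (v k)) * (m * v j) := by
      rw [Finset.mul_sum, Finset.sum_mul]
      exact Finset.sum_congr rfl fun k _ => by simp only [mul_assoc]
    rw [h1, hvsum, mul_one]
    simp only [mul_assoc]
  -- the sets involved
  set kA : Set M := { x : M | ∃ hx : x ∈ A, EA ⟨x, hx⟩ = 0 } with hkA
  set kB : Set M := { x : M | ∃ hx : x ∈ B, EB ⟨x, hx⟩ = 0 } with hkB
  set X' : Set M := ((fun a => q * a * q) '' (A : Set M)) ∩ kA with hX'def
  set Y' : Set M := ((fun b => q * b * q) '' (B : Set M)) ∩ kB with hY'def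
  -- corner compressions of reduced elements stay reduced
  have hX' : ∀ x ∈ kA, ∀ i k : Fin (ℓ+1), star (v i) * x * v k ∈ X' := by
    rintro x ⟨hxA, hxE⟩ i k
    have hmem : star (v i) * x * v k ∈ A :=
      mul_mem (mul_mem (hDA (hDstar _ (hvD i))) hxA) (hDA (hvD k))
    refine ⟨⟨star (v i) * x * v k, hmem, corner i k x⟩, hmem, ?_⟩
    have h2 := hEA2 ⟨star (v i), hDstar _ (hvD i)⟩ ⟨v k, hvD k⟩ ⟨x, hxA⟩
    rw [hxE] at h2
    simp only [ZeroMemClass.coe_zero, mul_zero, zero_mul] at h2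
    have harg : (⟨star (v i), hDA (hDstar _ (hvD i))⟩ * ⟨x, hxA⟩
        * ⟨v k, hDA (hvD k)⟩ : A) = ⟨star (v i) * x * v k, hmem⟩ := rfl
    rw [harg] at h2
    exact Subtype.ext h2
  have hY' : ∀ x ∈ kB, ∀ i k : Fin (ℓ+1), star (v i) * x * v k ∈ Y' := by
    rintro x ⟨hxB, hxE⟩ i k
    have hmem : star (v i) * x * v k ∈ B :=
      mul_mem (mul_mem (hDB (hDstar _ (hvD i))) hxB) (hDB (hvD k))
    refine ⟨⟨star (v i) * x * v k, hmem, corner i k x⟩, hmem, ?_⟩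
    have h2 := hEB2 ⟨star (v i), hDstar _ (hvD i)⟩ ⟨v k, hvD k⟩ ⟨x, hxB⟩
    rw [hxE] at h2
    simp only [ZeroMemClass.coe_zero, mul_zero, zero_mul] at h2
    have harg : (⟨star (v i), hDB (hDstar _ (hvD i))⟩ * ⟨x, hxB⟩
        * ⟨v k, hDB (hvD k)⟩ : B) = ⟨star (v i) * x * v k, hmem⟩ := rfl
    rw [harg] at h2
    exact Subtype.ext h2
  -- main induction: compressions of alternating products lie in the span of
  -- corner alternating products with the same leading label
  have main : ∀ (b : Bool) (m : M), AltFrom kA kB b m → ∀ i j : Fin (ℓ+1),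
      star (v i) * m * v j ∈ Submodule.span ℂ { w : M | AltFrom X' Y' b w } := by
    intro b m hm
    induction hm with
    | base_t x hx =>
      intro i j
      exact Submodule.subset_span (AltFrom.base_t _ (hX' x hx i j))
    | base_f x hx =>
      intro i j
      exact Submodule.subset_span (AltFrom.base_f _ (hY' x hx i j))
    | cons_t x m hx hm ih =>
      intro i j
      rw [split i j x m]
      refine Submodule.sum_mem _ fun k _ => ?_
      exact mul_mem_span (star (v i) * x * v k) _ _
        (fun w hw => AltFrom.cons_t _ _ (hX' x hx i k) hw) (ih k j)
    | cons_f x m hx hm ih =>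
      intro i j
      rw [split i j x m]
      refine Submodule.sum_mem _ fun k _ => ?_
      exact mul_mem_span (star (v i) * x * v k) _ _
        (fun w hw => AltFrom.cons_f _ _ (hY' x hx i k) hw) (ih k j)
  -- conclusion
  rintro x (hxD | hxAlt)
  · rw [SetLike.mem_coe, key x]
    refine Submodule.sum_mem _ fun i _ => Submodule.sum_mem _ fun j _ =>
      Submodule.subset_span ?_
    exact ⟨i, j, star (v i) * x * v j,
      Or.inl ⟨star (v i) * x * v j,
        mul_mem (mul_mem (hDstar _ (hvD i)) hxD) (hvD j), corner i j x⟩, rfl⟩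
  · obtain ⟨b, hb⟩ := altSet_exists_altFrom hxAlt
    rw [SetLike.mem_coe, key x]
    refine Submodule.sum_mem _ fun i _ => Submodule.sum_mem _ fun j _ => ?_
    refine span_map_mem
      ((LinearMap.mulRight ℂ (star (v j))).comp (LinearMap.mulLeft ℂ (v i)))
      { w : M | AltFrom X' Y' b w } _
      ?_ (main b x hb i j)
    intro w hw
    exact ⟨i, j, w, Or.inr hw.mem_altSet, rfl⟩
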